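/- The subgroup of S₆ generated by (1 2 3) and (4 5 6) is a normal subgroup of the group G₃ generated by (1 2 3), (1 4)(2 5)(3 6), and (1 2)(4 5), and the quotient is isomorphic to the Klein four-group C₂ × C₂. -/

import Mathlib

def blk (p : Fin 6) : ZMod 2 := if p.val < 3 then 0 else 1
def crd (p : Fin 6) : ZMod 3 := (p.val : ZMod 3)
def eps (σ : Equiv.Perm (Fin 6)) : ZMod 3 := crd (σ 1) - crd (σ 0)

def P (σ : Equiv.Perm (Fin 6)) : Prop :=
  ∀ p q : Fin 6, blk (σ p) - blk (σ q) = blk p - blk q ∧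
    (blk p = blk q → crd (σ p) - crd (σ q) = eps σ * (crd p - crd q))

instance (σ : Equiv.Perm (Fin 6)) : Decidable (P σ) := by unfold P; infer_instance

lemma pt_eq : ∀ p q : Fin 6, blk p = blk q → crd p = crd q → p = q := by decide

lemma eps_ne_zero {σ : Equiv.Perm (Fin 6)} (hσ : P σ) : eps σ ≠ 0 := by
  intro h
  have h1 : crd (σ 1) = crd (σ 0) := sub_eq_zero.mp h
  have h2 : blk (σ 1) = blk (σ 0) := sub_eq_zero.mp (by
    rw [(hσ 1 0).1]; decide)
  exact absurd (σ.injective (pt_eq _ _ h2 h1)) (by decide)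

lemma eps_mul {σ τ : Equiv.Perm (Fin 6)} (hσ : P σ) (hτ : P τ) :
    eps (σ * τ) = eps σ * eps τ := by
  have hbt : blk (τ 1) = blk (τ 0) := sub_eq_zero.mp (by rw [(hτ 1 0).1]; decide)
  have := (hσ (τ 1) (τ 0)).2 hbt
  show crd (σ (τ 1)) - crd (σ (τ 0)) = _
  rw [this]; rfl

lemma P_mul {σ τ : Equiv.Perm (Fin 6)} (hσ : P σ) (hτ : P τ) : P (σ * τ) := by
  intro p q
  constructor
  · calc blk ((σ * τ) p) - blk ((σ * τ) q) = blk (τ p) - blk (τ q) := (hσ _ _).1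
    _ = blk p - blk q := (hτ _ _).1
  · intro hpq
    have hbt : blk (τ p) = blk (τ q) := sub_eq_zero.mp (by rw [(hτ p q).1, hpq, sub_self])
    show crd (σ (τ p)) - crd (σ (τ q)) = _
    rw [(hσ _ _).2 hbt, (hτ _ _).2 hpq, eps_mul hσ hτ, mul_assoc]

lemma perm_apply_inv_self (σ : Equiv.Perm (Fin 6)) (x : Fin 6) : σ (σ⁻¹ x) = x := by simp

lemma eps_inv {σ : Equiv.Perm (Fin 6)} (hσ : P σ) : eps σ * eps σ⁻¹ = 1 := by
  have hb : blk (σ⁻¹ 1) = blk (σ⁻¹ 0) := sub_eq_zero.mp (by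
    have := (hσ (σ⁻¹ 1) (σ⁻¹ 0)).1
    simp only [perm_apply_inv_self] at this
    rw [← this]; decide)
  have h10 := (hσ (σ⁻¹ 1) (σ⁻¹ 0)).2 hb
  simp only [perm_apply_inv_self] at h10
  have hc : crd 1 - crd 0 = 1 := by decide
  rw [hc] at h10
  exact h10.symm

lemma P_inv {σ : Equiv.Perm (Fin 6)} (hσ : P σ) : P σ⁻¹ := by
  intro p q
  have hblk : blk (σ⁻¹ p) - blk (σ⁻¹ q) = blk p - blk q := by
    have := (hσ (σ⁻¹ p) (σ⁻¹ q)).1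
    simp only [perm_apply_inv_self] at this
    exact this.symm
  refine ⟨hblk, fun hpq => ?_⟩
  have hbi : blk (σ⁻¹ p) = blk (σ⁻¹ q) := sub_eq_zero.mp (by rw [hblk, hpq, sub_self])
  have key := (hσ (σ⁻¹ p) (σ⁻¹ q)).2 hbi
  simp only [perm_apply_inv_self] at key
  have he := eps_inv hσ
  linear_combination (-(eps σ⁻¹)) * key - (crd (σ⁻¹ p) - crd (σ⁻¹ q)) * he

lemma P_one : P 1 := by decide

def Hgrp : Subgroup (Equiv.Perm (Fin 6)) where
  carrier := {σ | P σ}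
  one_mem' := P_one
  mul_mem' := fun ha hb => P_mul ha hb
  inv_mem' := fun ha => P_inv ha

def F (σ : Equiv.Perm (Fin 6)) : Multiplicative (ZMod 2) × Multiplicative (ZMod 2) :=
  (Multiplicative.ofAdd (blk (σ 0)), Multiplicative.ofAdd (if eps σ = 1 then 0 else 1))

lemma s_add : ∀ z w : ZMod 3, (z = 1 ∨ z = 2) → (w = 1 ∨ w = 2) →
    (if z*w = 1 then (0:ZMod 2) else 1) = (if z = 1 then 0 else 1) + (if w = 1 then 0 else 1) := by
  decide

lemma nz_cases : ∀ z : ZMod 3, z ≠ 0 → z = 1 ∨ z = 2 := by decide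

lemma blk_apply {σ : Equiv.Perm (Fin 6)} (hσ : P σ) (p : Fin 6) :
    blk (σ p) = blk p + blk (σ 0) := by
  have := (hσ p 0).1
  have h0 : blk 0 = 0 := rfl
  rw [h0, sub_zero] at this
  linear_combination this

lemma F_mul {σ τ : Equiv.Perm (Fin 6)} (hσ : P σ) (hτ : P τ) : F (σ * τ) = F σ * F τ := by
  have he : eps (σ * τ) = eps σ * eps τ := eps_mul hσ hτ
  have hb : blk ((σ * τ) 0) = blk (τ 0) + blk (σ 0) := blk_apply hσ (τ 0)
  unfold F
  refine Prod.ext ?_ ?_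
  · show Multiplicative.ofAdd _ = Multiplicative.ofAdd _ * Multiplicative.ofAdd _
    rw [← ofAdd_add, hb, add_comm]
  · show Multiplicative.ofAdd _ = Multiplicative.ofAdd _ * Multiplicative.ofAdd _
    rw [← ofAdd_add, he,
      s_add _ _ (nz_cases _ (eps_ne_zero hσ)) (nz_cases _ (eps_ne_zero hτ))]

def fH : Hgrp →* Multiplicative (ZMod 2) × Multiplicative (ZMod 2) where
  toFun h := F h.1
  map_one' := by decide
  map_mul' a b := F_mul a.2 b.2

lemma F_one : F 1 = 1 := by decide

lemma key : ∀ i j : Fin 3, ∀ p : Fin 6,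
    blk ((c[0,1,2] ^ (i:ℕ) * c[3,4,5] ^ (j:ℕ) : Equiv.Perm (Fin 6)) p) = blk p ∧
    crd ((c[0,1,2] ^ (i:ℕ) * c[3,4,5] ^ (j:ℕ) : Equiv.Perm (Fin 6)) p)
      = crd p + (if blk p = 0 then ((i:ℕ) : ZMod 3) else ((j:ℕ) : ZMod 3)) := by decide

lemma vcast : ∀ a : ZMod 3, ((a.val : ℕ) : ZMod 3) = a := by decide

lemma z2_cases : ∀ z : ZMod 2, z ≠ 0 → z = 1 := by decide

lemma N_le : ∀ g ∈ Subgroup.closure ({c[0,1,2], c[3,4,5]} : Set (Equiv.Perm (Fin 6))),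
    P g ∧ F g = 1 := by
  intro g hg
  refine Subgroup.closure_induction (fun x hx => ?_) ⟨P_one, F_one⟩
    (fun x y _ _ hx hy => ⟨P_mul hx.1 hy.1, by rw [F_mul hx.1 hy.1, hx.2, hy.2, one_mul]⟩)
    (fun x _ hx => ⟨P_inv hx.1, ?_⟩) hg
  · simp only [Set.mem_insert_iff, Set.mem_singleton_iff] at hx
    rcases hx with rfl | rfl
    · exact ⟨by decide, by decide⟩
    · exact ⟨by decide, by decide⟩
  · have h := F_mul hx.1 (P_inv hx.1)
    rw [mul_inv_cancel, F_one, hx.2, one_mul] at h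
    exact h.symm

lemma mem_N_of {g : Equiv.Perm (Fin 6)} (hP : P g) (h1 : blk (g 0) = 0) (h2 : eps g = 1) :
    g ∈ Subgroup.closure ({c[0,1,2], c[3,4,5]} : Set (Equiv.Perm (Fin 6))) := by
  have h0 : crd (0 : Fin 6) = 0 := by decide
  have h3 : crd (3 : Fin 6) = 0 := by decide
  let I : Fin 3 := ⟨(crd (g 0)).val, ZMod.val_lt _⟩
  let J : Fin 3 := ⟨(crd (g 3)).val, ZMod.val_lt _⟩
  have hI : ((I : ℕ) : ZMod 3) = crd (g 0) := vcast _
  have hJ : ((J : ℕ) : ZMod 3) = crd (g 3) := vcast _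
  have hg : g = c[0,1,2] ^ (I : ℕ) * c[3,4,5] ^ (J : ℕ) := by
    apply Equiv.ext; intro p
    refine (pt_eq _ _ ?_ ?_).symm
    · rw [(key I J p).1, blk_apply hP p, h1, add_zero]
    · rw [(key I J p).2, hI, hJ]
      by_cases hb : blk p = 0
      · have h := (hP p 0).2 (by rw [hb]; rfl)
        rw [h2, one_mul] at h
        rw [if_pos hb]
        linear_combination h0 - h
      · have h := (hP p 3).2 (by rw [z2_cases _ hb]; rfl)
        rw [h2, one_mul] at h
        rw [if_neg hb]
        linear_combination h3 - h
  rw [hg]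
  exact mul_mem (pow_mem (Subgroup.subset_closure (by simp)) _)
    (pow_mem (Subgroup.subset_closure (by simp)) _)

theorem N_normal_in_G3_quotient_klein :
    letI N : Subgroup (Equiv.Perm (Fin 6)) := Subgroup.closure {c[0, 1, 2], c[3, 4, 5]}
    letI G₃ : Subgroup (Equiv.Perm (Fin 6)) :=
      Subgroup.closure {c[0, 1, 2], c[0, 3] * c[1, 4] * c[2, 5], c[0, 1] * c[3, 4]}
    ∃ hn : (N.subgroupOf G₃).Normal,
      letI := hn
      Nonempty ((G₃ ⧸ N.subgroupOf G₃) ≃*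
        (Multiplicative (ZMod 2) × Multiplicative (ZMod 2))) := by
  have hle : Subgroup.closure
      ({c[0, 1, 2], c[0, 3] * c[1, 4] * c[2, 5], c[0, 1] * c[3, 4]} :
        Set (Equiv.Perm (Fin 6))) ≤ Hgrp := by
    rw [Subgroup.closure_le]
    intro g hg
    simp only [Set.mem_insert_iff, Set.mem_singleton_iff] at hg
    rcases hg with rfl | rfl | rfl
    · exact (by decide : P c[0,1,2])
    · exact (by decide : P (c[0,3] * c[1,4] * c[2,5]))
    · exact (by decide : P (c[0,1] * c[3,4]))
  let φ := fH.comp (Subgroup.inclusion hle)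
  have hker : (Subgroup.closure ({c[0, 1, 2], c[3, 4, 5]} : Set (Equiv.Perm (Fin 6)))).subgroupOf
      (Subgroup.closure ({c[0, 1, 2], c[0, 3] * c[1, 4] * c[2, 5], c[0, 1] * c[3, 4]} :
        Set (Equiv.Perm (Fin 6)))) = φ.ker := by
    ext ⟨g, hg⟩
    simp only [Subgroup.mem_subgroupOf, MonoidHom.mem_ker]
    constructor
    · intro hN
      exact (N_le g hN).2
    · intro hk
      have hk' : F g = 1 := hk
      have h1 : blk (g 0) = 0 := by
        have := congrArg Prod.fst hk'
        exact ofAdd_eq_one.mp this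
      have h2 : eps g = 1 := by
        have h2' : Multiplicative.ofAdd (if eps g = 1 then (0 : ZMod 2) else 1) = 1 :=
          congrArg Prod.snd hk'
        rw [ofAdd_eq_one] at h2'
        by_contra hne
        rw [if_neg hne] at h2'
        exact absurd h2' (by decide)
      exact mem_N_of (hle hg) h1 h2
  have hn : ((Subgroup.closure ({c[0, 1, 2], c[3, 4, 5]} : Set (Equiv.Perm (Fin 6)))).subgroupOf
      (Subgroup.closure ({c[0, 1, 2], c[0, 3] * c[1, 4] * c[2, 5], c[0, 1] * c[3, 4]} :
        Set (Equiv.Perm (Fin 6))))).Normal := by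
    rw [hker]; exact MonoidHom.normal_ker φ
  have hsurj : Function.Surjective φ := by
    have hcases : ∀ k : Multiplicative (ZMod 2) × Multiplicative (ZMod 2),
        k = F 1 ∨ k = F (c[0,3] * c[1,4] * c[2,5]) ∨ k = F (c[0,1] * c[3,4]) ∨
          k = F ((c[0,3] * c[1,4] * c[2,5]) * (c[0,1] * c[3,4])) := by decide
    have ha : (c[0,3] * c[1,4] * c[2,5] : Equiv.Perm (Fin 6)) ∈
        Subgroup.closure ({c[0, 1, 2], c[0, 3] * c[1, 4] * c[2, 5], c[0, 1] * c[3, 4]} :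
          Set (Equiv.Perm (Fin 6))) := Subgroup.subset_closure (by simp)
    have hb : (c[0,1] * c[3,4] : Equiv.Perm (Fin 6)) ∈
        Subgroup.closure ({c[0, 1, 2], c[0, 3] * c[1, 4] * c[2, 5], c[0, 1] * c[3, 4]} :
          Set (Equiv.Perm (Fin 6))) := Subgroup.subset_closure (by simp)
    intro k
    rcases hcases k with h | h | h | h
    · exact ⟨1, h ▸ rfl⟩
    · exact ⟨⟨_, ha⟩, h ▸ rfl⟩
    · exact ⟨⟨_, hb⟩, h ▸ rfl⟩
    · exact ⟨⟨_, mul_mem ha hb⟩, h ▸ rfl⟩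
  refine ⟨hn, ?_⟩
  exact ⟨(QuotientGroup.quotientMulEquivOfEq hker).trans
    (QuotientGroup.quotientKerEquivOfSurjective φ hsurj)⟩
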